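/- Let A and B be n×n positive semidefinite complex matrices, and set a = tr(A), b = tr(B). Then ‖B(A+B)^2 − (A+B)^2 B‖_1 ≤ a^2 b + a b^2 = ((a+b)^3 − a^3 − b^3)/3. -/

import Mathlib

open scoped ComplexOrder

/-- The trace norm `‖Z‖₁ = tr ((Zᴴ Z)^{1/2})` of a square complex matrix, i.e. the sum of its
singular values. -/
noncomputable def traceNorm {n : ℕ} (Z : Matrix (Fin n) (Fin n) ℂ) : ℝ :=
  ((Matrix.posSemidef_conjTranspose_mul_self Z).1.eigenvectorUnitary.1 *
      Matrix.diagonal ((fun x : ℝ => (x : ℂ)) ∘ (fun x : ℝ => Real.sqrt x) ∘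
        (Matrix.posSemidef_conjTranspose_mul_self Z).1.eigenvalues) *
      (star (Matrix.posSemidef_conjTranspose_mul_self Z).1.eigenvectorUnitary.1 :
        Matrix (Fin n) (Fin n) ℂ)).trace.re

section TraceNormAux

open Matrix
open scoped Matrix.Norms.L2Operator
open scoped MatrixOrder

variable {n : ℕ}


lemma tn_norm_diagonal_le {d : Fin n → ℂ} {c : ℝ} (hc : 0 ≤ c) (h : ∀ i, ‖d i‖ ≤ c) :
    ‖diagonal d‖ ≤ c := by
  rw [Matrix.l2_opNorm_def]
  refine ContinuousLinearMap.opNorm_le_bound _ hc fun x => ?_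
  simp only [LinearEquiv.trans_apply, LinearMap.coe_toContinuousLinearMap']
  rw [Matrix.toEuclideanLin_apply]
  rw [EuclideanSpace.norm_eq, EuclideanSpace.norm_eq]
  rw [← Real.sqrt_sq hc, ← Real.sqrt_mul (sq_nonneg c)]
  apply Real.sqrt_le_sqrt
  rw [Finset.mul_sum]
  apply Finset.sum_le_sum
  intro i _
  have : (WithLp.equiv 2 (Fin n → ℂ)).symm (diagonal d *ᵥ (WithLp.equiv 2 (Fin n → ℂ)) x) i
      = d i * x i := by
    simp [Matrix.mulVec_diagonal]
  rw [show (WithLp.toLp 2 (diagonal d *ᵥ x.ofLp)).ofLp i = d i * x i from this]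
  rw [norm_mul, mul_pow]
  have h1 : ‖d i‖ ^ 2 ≤ c ^ 2 := by
    have := h i
    nlinarith [norm_nonneg (d i)]
  nlinarith [sq_nonneg ‖(x : Fin n → ℂ) i‖]

lemma tn_norm_le_one_of_unitary {V : Matrix (Fin n) (Fin n) ℂ} (hV : Vᴴ * V = 1) : ‖V‖ ≤ 1 := by
  have h1 : ‖(1 : Matrix (Fin n) (Fin n) ℂ)‖ ≤ 1 := by
    rw [← Matrix.diagonal_one]
    exact tn_norm_diagonal_le zero_le_one (by simp)
  have h2 := Matrix.l2_opNorm_conjTranspose_mul_self V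
  rw [hV] at h2
  nlinarith [norm_nonneg V]

lemma tn_trace_conj {V : Matrix (Fin n) (Fin n) ℂ} (hV : Vᴴ * V = 1) (d : Fin n → ℂ) :
    (V * diagonal d * Vᴴ).trace = ∑ i, d i := by
  rw [Matrix.trace_mul_cycle, hV, Matrix.one_mul, Matrix.trace_diagonal]

lemma tn_norm_conj_le {V : Matrix (Fin n) (Fin n) ℂ} (hV : V ∈ Matrix.unitaryGroup (Fin n) ℂ)
    {d : Fin n → ℂ} {c : ℝ} (hc : 0 ≤ c) (h : ∀ i, ‖d i‖ ≤ c) :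
    ‖V * diagonal d * Vᴴ‖ ≤ c := by
  have hV1 : Vᴴ * V = 1 := by
    simpa [Matrix.star_eq_conjTranspose] using (Matrix.mem_unitaryGroup_iff'.mp hV)
  have hV2 : (Vᴴ)ᴴ * Vᴴ = 1 := by
    simpa [Matrix.star_eq_conjTranspose] using (Matrix.mem_unitaryGroup_iff.mp hV)
  have hnV : ‖V‖ ≤ 1 := tn_norm_le_one_of_unitary hV1
  have hnVh : ‖Vᴴ‖ ≤ 1 := tn_norm_le_one_of_unitary hV2
  have hd : ‖diagonal d‖ ≤ c := tn_norm_diagonal_le hc h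
  calc ‖V * diagonal d * Vᴴ‖ ≤ ‖V * diagonal d‖ * ‖Vᴴ‖ := Matrix.l2_opNorm_mul _ _
    _ ≤ (‖V‖ * ‖diagonal d‖) * ‖Vᴴ‖ := by
        apply mul_le_mul_of_nonneg_right (Matrix.l2_opNorm_mul _ _) (norm_nonneg _)
    _ ≤ (1 * c) * 1 := by
        apply mul_le_mul _ hnVh (norm_nonneg _) (by positivity)
        exact mul_le_mul hnV hd (norm_nonneg _) zero_le_one
    _ = c := by ring

lemma tn_abs_trace_mul_le {A : Matrix (Fin n) (Fin n) ℂ} (M : Matrix (Fin n) (Fin n) ℂ)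
    (hA : A.PosSemidef) :
    ‖(M * A).trace‖ ≤ ‖M‖ * A.trace.re := by
  set s := CFC.sqrt A with hsdef
  have hss : s * s = A := CFC.sqrt_mul_sqrt_self A hA.nonneg
  have hherm : s.IsHermitian := (CFC.sqrt_nonneg A).posSemidef.1
  have hsapp : ∀ i j, s i j = starRingEnd ℂ (s j i) := fun i j => (hherm.apply i j).symm
  set col : Fin n → (Fin n → ℂ) := fun i j => s j i with hcol
  set x : Fin n → EuclideanSpace ℂ (Fin n) :=
    fun i => (WithLp.equiv 2 (Fin n → ℂ)).symm (col i) with hx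
  set y : Fin n → EuclideanSpace ℂ (Fin n) :=
    fun i => (EuclideanSpace.equiv (Fin n) ℂ).symm (M *ᵥ col i) with hy
  have htr : (M * A).trace = ∑ i, (@inner ℂ _ _ (x i) (y i)) := by
    rw [← hss, ← Matrix.mul_assoc, Matrix.trace_mul_comm]
    show ∑ i, (s * (M * s)) i i = _
    refine Finset.sum_congr rfl fun i _ => ?_
    rw [Matrix.mul_apply, PiLp.inner_apply]
    refine Finset.sum_congr rfl fun j _ => ?_
    rw [RCLike.inner_apply]
    rw [hsapp i j]
    exact mul_comm _ _
  have hnormx : ∀ i, ‖x i‖ ^ 2 = ∑ j, ‖s j i‖ ^ 2 := by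
    intro i
    rw [EuclideanSpace.norm_eq, Real.sq_sqrt (by positivity)]
    rfl
  have htrA : A.trace.re = ∑ i, ‖x i‖ ^ 2 := by
    have : A.trace = ∑ i, (A i i) := rfl
    rw [this, Complex.re_sum]
    refine Finset.sum_congr rfl fun i _ => ?_
    rw [hnormx i, ← hss, Matrix.mul_apply, Complex.re_sum]
    refine Finset.sum_congr rfl fun j _ => ?_
    rw [hsapp i j]
    simp [Complex.sq_norm, Complex.normSq_apply, Complex.mul_re, Complex.conj_re, Complex.conj_im]
  rw [htr, htrA, Finset.mul_sum]
  refine (norm_sum_le _ _).trans (Finset.sum_le_sum fun i _ => ?_)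
  have h1 : ‖(@inner ℂ _ _ (x i) (y i))‖ ≤ ‖x i‖ * ‖y i‖ := norm_inner_le_norm _ _
  have h2 : ‖y i‖ ≤ ‖M‖ * ‖x i‖ := Matrix.l2_opNorm_mulVec M (x i)
  calc ‖(@inner ℂ _ _ (x i) (y i))‖ ≤ ‖x i‖ * (‖M‖ * ‖x i‖) :=
        h1.trans (mul_le_mul_of_nonneg_left h2 (norm_nonneg _))
    _ = ‖M‖ * ‖x i‖ ^ 2 := by ring

lemma tn_star_mul_self {H : Matrix (Fin n) (Fin n) ℂ} (hH : H.IsHermitian) :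
    ((hH.eigenvectorUnitary : Matrix (Fin n) (Fin n) ℂ))ᴴ *
      (hH.eigenvectorUnitary : Matrix (Fin n) (Fin n) ℂ) = 1 := by
  rw [← Matrix.star_eq_conjTranspose]
  exact Unitary.coe_star_mul_self hH.eigenvectorUnitary

lemma tn_spectral {H : Matrix (Fin n) (Fin n) ℂ} (hH : H.IsHermitian) :
    H = (hH.eigenvectorUnitary : Matrix (Fin n) (Fin n) ℂ) *
      diagonal (fun i => ((hH.eigenvalues i : ℝ) : ℂ)) *
      ((hH.eigenvectorUnitary : Matrix (Fin n) (Fin n) ℂ))ᴴ := by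
  conv_lhs => rw [hH.spectral_theorem]
  rw [← Matrix.star_eq_conjTranspose]
  rfl

lemma tn_trace_eq_sum_eig {H : Matrix (Fin n) (Fin n) ℂ} (hH : H.IsHermitian) :
    H.trace = ((∑ i, hH.eigenvalues i : ℝ) : ℂ) := by
  conv_lhs => rw [tn_spectral hH]
  rw [tn_trace_conj (tn_star_mul_self hH)]
  push_cast
  rfl

lemma tn_trace_re_eq_sum {A : Matrix (Fin n) (Fin n) ℂ} (hA : A.PosSemidef) :
    A.trace.re = ∑ j, hA.1.eigenvalues j := by
  rw [tn_trace_eq_sum_eig hA.1, Complex.ofReal_re]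

lemma tn_trace_re_nonneg {A : Matrix (Fin n) (Fin n) ℂ} (hA : A.PosSemidef) :
    0 ≤ A.trace.re := by
  rw [tn_trace_re_eq_sum hA]
  exact Finset.sum_nonneg fun j _ => hA.eigenvalues_nonneg j

lemma tn_eig_le {A : Matrix (Fin n) (Fin n) ℂ} (hA : A.PosSemidef) (i : Fin n) :
    hA.1.eigenvalues i ≤ A.trace.re := by
  rw [tn_trace_re_eq_sum hA]
  exact Finset.single_le_sum (fun j _ => hA.eigenvalues_nonneg j) (Finset.mem_univ i)

lemma tn_shift_norm_le {A : Matrix (Fin n) (Fin n) ℂ} (hA : A.PosSemidef) :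
    ‖A - ((A.trace.re / 2 : ℝ) : ℂ) • (1 : Matrix (Fin n) (Fin n) ℂ)‖ ≤ A.trace.re / 2 := by
  have ht : 0 ≤ A.trace.re := tn_trace_re_nonneg hA
  set c : ℝ := A.trace.re / 2 with hc
  set V := (hA.1.eigenvectorUnitary : Matrix (Fin n) (Fin n) ℂ) with hV
  have hVmem : V ∈ Matrix.unitaryGroup (Fin n) ℂ := hA.1.eigenvectorUnitary.2
  have hVV : V * Vᴴ = 1 := by
    rw [← Matrix.star_eq_conjTranspose]
    exact Matrix.mem_unitaryGroup_iff.mp hVmem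
  have hdiag : diagonal (fun i => ((hA.1.eigenvalues i - c : ℝ) : ℂ)) =
      diagonal (fun i => ((hA.1.eigenvalues i : ℝ) : ℂ)) - (c : ℂ) • (1 : Matrix (Fin n) (Fin n) ℂ) := by
    ext i j
    by_cases h : i = j <;> simp [Matrix.diagonal_apply, Matrix.one_apply, h, Complex.ofReal_sub]
  have key : A - ((c : ℝ) : ℂ) • (1 : Matrix (Fin n) (Fin n) ℂ) =
      V * diagonal (fun i => ((hA.1.eigenvalues i - c : ℝ) : ℂ)) * Vᴴ := by
    rw [hdiag, Matrix.mul_sub, Matrix.sub_mul, Matrix.mul_smul, Matrix.mul_one,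
      Matrix.smul_mul, hVV, ← tn_spectral hA.1]
  rw [key]
  refine tn_norm_conj_le hVmem (by positivity) fun i => ?_
  rw [Complex.norm_real, Real.norm_eq_abs, abs_le]
  constructor
  · have := hA.eigenvalues_nonneg i; linarith
  · have := tn_eig_le hA i; rw [hc]; linarith



lemma tn_conj_mul {V : Matrix (Fin n) (Fin n) ℂ} (hV : Vᴴ * V = 1) (d e : Fin n → ℂ) :
    (V * diagonal d * Vᴴ) * (V * diagonal e * Vᴴ) =
      V * diagonal (fun i => d i * e i) * Vᴴ := by
  rw [← Matrix.diagonal_mul_diagonal]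
  simp only [Matrix.mul_assoc]
  rw [← Matrix.mul_assoc Vᴴ V, hV, Matrix.one_mul]

lemma tn_sqrt_eq {X : Matrix (Fin n) (Fin n) ℂ} (hX : X.PosSemidef) :
    hX.1.eigenvectorUnitary.1 *
      Matrix.diagonal ((fun x : ℝ => (x : ℂ)) ∘ (fun x : ℝ => Real.sqrt x) ∘ hX.1.eigenvalues) *
      (star hX.1.eigenvectorUnitary.1 : Matrix (Fin n) (Fin n) ℂ) = CFC.sqrt X := by
  rw [Matrix.star_eq_conjTranspose]
  symm
  apply CFC.sqrt_unique
  · rw [tn_conj_mul (tn_star_mul_self hX.1)]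
    conv_rhs => rw [tn_spectral hX.1]
    congr 3
    funext i
    simp only [Function.comp]
    rw [← Complex.ofReal_mul, Real.mul_self_sqrt (hX.eigenvalues_nonneg i)]
  · exact ((Matrix.posSemidef_diagonal_iff.mpr fun i =>
      Complex.zero_le_real.mpr (Real.sqrt_nonneg _)).mul_mul_conjTranspose_same _).nonneg

/-- For positive semidefinite `A`, `B` with `a = tr A`, `b = tr B`:
`‖B (A+B)² − (A+B)² B‖₁ ≤ a² b + a b² = ((a+b)³ − a³ − b³)/3`. -/
theorem traceNorm_commutator_square_le
    {n : ℕ} (A B : Matrix (Fin n) (Fin n) ℂ)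
    (hA : A.PosSemidef) (hB : B.PosSemidef)
    (a b : ℝ) (ha : a = A.trace.re) (hb : b = B.trace.re) :
    traceNorm (B * (A + B) ^ 2 - (A + B) ^ 2 * B) ≤ a ^ 2 * b + a * b ^ 2 ∧
      a ^ 2 * b + a * b ^ 2 = ((a + b) ^ 3 - a ^ 3 - b ^ 3) / 3 := by
  refine ⟨?_, by ring⟩
  have hAH : Aᴴ = A := hA.1
  have hBH : Bᴴ = B := hB.1
  set C : Matrix (Fin n) (Fin n) ℂ := B * A - A * B with hC
  set Z : Matrix (Fin n) (Fin n) ℂ := B * (A + B) ^ 2 - (A + B) ^ 2 * B with hZdef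
  have hZeq : Z = A * C + C * A + B * C + C * B := by
    rw [hZdef, hC]; noncomm_ring
  have hZstar : Zᴴ = -Z := by
    rw [hZdef]
    simp only [Matrix.conjTranspose_sub, Matrix.conjTranspose_mul, Matrix.conjTranspose_pow,
      Matrix.conjTranspose_add, hAH, hBH, neg_sub]
  set H : Matrix (Fin n) (Fin n) ℂ := Complex.I • Z with hH
  have hherm : H.IsHermitian := by
    show Hᴴ = H
    rw [hH, Matrix.conjTranspose_smul, hZstar, Complex.star_def, Complex.conj_I,
      neg_smul, smul_neg, neg_neg]
  have hZZ : Zᴴ * Z = H * H := by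
    rw [hZstar, hH, Matrix.smul_mul, Matrix.mul_smul, smul_smul, Complex.I_mul_I,
      neg_one_smul, Matrix.neg_mul]
  set lam : Fin n → ℝ := hherm.eigenvalues with hlam
  set V : Matrix (Fin n) (Fin n) ℂ := (hherm.eigenvectorUnitary : Matrix (Fin n) (Fin n) ℂ)
    with hV
  have hVmem : V ∈ Matrix.unitaryGroup (Fin n) ℂ := hherm.eigenvectorUnitary.2
  have hVs : Vᴴ * V = 1 := tn_star_mul_self hherm
  set P : Matrix (Fin n) (Fin n) ℂ := V * diagonal (fun i => ((|lam i| : ℝ) : ℂ)) * Vᴴ with hP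
  have hPpsd : P.PosSemidef := by
    rw [hP]
    exact (Matrix.posSemidef_diagonal_iff.mpr fun i =>
      Complex.zero_le_real.mpr (abs_nonneg _)).mul_mul_conjTranspose_same V
  have hPsq : P ^ 2 = Zᴴ * Z := by
    rw [pow_two, hZZ, hP]
    conv_rhs => rw [tn_spectral hherm]
    rw [tn_conj_mul hVs, tn_conj_mul hVs]
    have hfun : (fun i => ((|lam i| : ℝ) : ℂ) * ((|lam i| : ℝ) : ℂ))
        = fun i => ((hherm.eigenvalues i : ℝ) : ℂ) * ((hherm.eigenvalues i : ℝ) : ℂ) := by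
      funext i
      rw [← Complex.ofReal_mul, ← Complex.ofReal_mul, abs_mul_abs_self, hlam]
    rw [hfun]
  have hsqrt : CFC.sqrt (Zᴴ * Z) = P :=
    CFC.sqrt_unique (by rw [← hPsq, pow_two]) hPpsd.nonneg
  have htn : traceNorm Z = ∑ i, |lam i| := by
    rw [traceNorm, tn_sqrt_eq (Matrix.posSemidef_conjTranspose_mul_self Z), hsqrt, hP, tn_trace_conj hVs]
    rw [show (∑ i, ((|lam i| : ℝ) : ℂ)) = ((∑ i, |lam i| : ℝ) : ℂ) by push_cast; rfl]
    exact Complex.ofReal_re _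
  set W : Matrix (Fin n) (Fin n) ℂ :=
    V * diagonal (fun i => (if 0 ≤ lam i then (1 : ℂ) else -1)) * Vᴴ with hW
  have hWH : (W * H).trace = ((∑ i, |lam i| : ℝ) : ℂ) := by
    conv_lhs => rw [tn_spectral hherm, hW]
    rw [tn_conj_mul hVs, tn_trace_conj hVs]
    push_cast
    refine Finset.sum_congr rfl fun i _ => ?_
    split_ifs with h
    · rw [abs_of_nonneg h, one_mul]
    · rw [abs_of_neg (not_le.mp h)]; push_cast; ring
  have hWnorm : ‖W‖ ≤ 1 := by
    rw [hW]
    refine tn_norm_conj_le hVmem zero_le_one fun i => ?_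
    split_ifs <;> simp
  set M : Matrix (Fin n) (Fin n) ℂ := Complex.I • (C * W + W * C) with hM
  have htraceM : (W * H).trace = (M * A).trace + (M * B).trace := by
    rw [hH, Matrix.mul_smul, Matrix.trace_smul, hZeq]
    rw [hM, Matrix.smul_mul, Matrix.smul_mul, Matrix.trace_smul, Matrix.trace_smul, ← smul_add]
    congr 1
    rw [Matrix.mul_add, Matrix.mul_add, Matrix.mul_add, Matrix.add_mul, Matrix.add_mul]
    rw [Matrix.trace_add, Matrix.trace_add, Matrix.trace_add, Matrix.trace_add, Matrix.trace_add]
    rw [← Matrix.mul_assoc, ← Matrix.mul_assoc, ← Matrix.mul_assoc, ← Matrix.mul_assoc]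
    rw [Matrix.trace_mul_cycle W A C, Matrix.trace_mul_cycle W B C]
    ring
  -- norm bound on C
  have ha0 : 0 ≤ a := ha ▸ tn_trace_re_nonneg hA
  have hb0 : 0 ≤ b := hb ▸ tn_trace_re_nonneg hB
  set A' : Matrix (Fin n) (Fin n) ℂ := A - ((a / 2 : ℝ) : ℂ) • 1 with hA'
  set B' : Matrix (Fin n) (Fin n) ℂ := B - ((b / 2 : ℝ) : ℂ) • 1 with hB'
  have hCsplit : C = B' * A' - A' * B' := by
    rw [hC, hA', hB']
    simp only [Matrix.sub_mul, Matrix.mul_sub, Matrix.smul_mul, Matrix.mul_smul,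
      Matrix.mul_one, Matrix.one_mul, smul_smul, smul_add, smul_sub, smul_neg, neg_smul,
      mul_comm]
    abel
  have hnA' : ‖A'‖ ≤ a / 2 := by
    rw [hA', ha]; exact tn_shift_norm_le hA
  have hnB' : ‖B'‖ ≤ b / 2 := by
    rw [hB', hb]; exact tn_shift_norm_le hB
  have hnC : ‖C‖ ≤ a * b / 2 := by
    rw [hCsplit]
    calc ‖B' * A' - A' * B'‖ ≤ ‖B' * A'‖ + ‖A' * B'‖ := norm_sub_le _ _
      _ ≤ ‖B'‖ * ‖A'‖ + ‖A'‖ * ‖B'‖ :=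
          add_le_add (Matrix.l2_opNorm_mul _ _) (Matrix.l2_opNorm_mul _ _)
      _ ≤ (b / 2) * (a / 2) + (a / 2) * (b / 2) := by
          gcongr <;> first | exact norm_nonneg _ | assumption
      _ = a * b / 2 := by ring
  have hnM : ‖M‖ ≤ a * b := by
    rw [hM]
    rw [norm_smul]
    have h1 : ‖Complex.I‖ = 1 := by simp
    rw [h1, one_mul]
    calc ‖C * W + W * C‖ ≤ ‖C * W‖ + ‖W * C‖ := norm_add_le _ _
      _ ≤ ‖C‖ * ‖W‖ + ‖W‖ * ‖C‖ :=
          add_le_add (Matrix.l2_opNorm_mul _ _) (Matrix.l2_opNorm_mul _ _)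
      _ ≤ (a * b / 2) * 1 + 1 * (a * b / 2) := by
          gcongr <;> first | exact norm_nonneg _ | assumption
      _ = a * b := by ring
  -- final chain
  have hfin : traceNorm Z ≤ ‖M‖ * (a + b) := by
    rw [htn]
    have : (∑ i, |lam i|) = ((W * H).trace).re := by rw [hWH, Complex.ofReal_re]
    rw [this, htraceM, Complex.add_re]
    have e1 : ((M * A).trace).re ≤ ‖M‖ * a := by
      calc ((M * A).trace).re ≤ ‖(M * A).trace‖ := Complex.re_le_norm _
        _ ≤ ‖M‖ * A.trace.re := tn_abs_trace_mul_le M hA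
        _ = ‖M‖ * a := by rw [ha]
    have e2 : ((M * B).trace).re ≤ ‖M‖ * b := by
      calc ((M * B).trace).re ≤ ‖(M * B).trace‖ := Complex.re_le_norm _
        _ ≤ ‖M‖ * B.trace.re := tn_abs_trace_mul_le M hB
        _ = ‖M‖ * b := by rw [hb]
    linarith
  calc traceNorm Z ≤ ‖M‖ * (a + b) := hfin
    _ ≤ (a * b) * (a + b) := by
        apply mul_le_mul_of_nonneg_right hnM (by linarith)
    _ = a ^ 2 * b + a * b ^ 2 := by ring

end TraceNormAux
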